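/- Let O_1, …, O_v be scoring octal (taking) games and suppose for each i the single-heap scoring Grundy value satisfies G_s(n) ≥ 0 for all heaps n ∈ O_i with n ≤ N_i. Then for any heaps n_i ∈ O_i with n_i ≤ N_i the selective-sum scoring Grundy value is additive: G_s(n_1 ▽ … ▽ n_v) = Σ_{i=1}^v G_s(n_i). -/

import Mathlib

/-- A scoring octal rule set: `t k` is the octal digit governing removals of `k` beans
(its bit `i` is set iff one may leave `i` heaps), and `p k` is the number of points the
mover scores for removing `k` beans. -/
structure Octal where
  t : ℕ → ℕ
  p : ℕ → ℝ

/-- A legal move in the octal game `O` on a heap of size `n`: remove `k ≥ 1` beans and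
leave the heaps `ns`, where bit `ns.length` of `t k` is set. -/
def Octal.HeapMove (O : Octal) (n k : ℕ) (ns : List ℕ) : Prop :=
  1 ≤ k ∧ k ≤ n ∧ ns.sum + k = n ∧ (O.t k).testBit ns.length

/-- A move in a conjunctive sum of octal heaps: the mover moves on *every* heap,
`pts` is the total number of points scored, and the third argument is the
resulting position. -/
inductive ConjMove : List (Octal × ℕ) → ℝ → List (Octal × ℕ) → Prop where
  | single {O : Octal} {n k : ℕ} {ns : List ℕ} :
      O.HeapMove n k ns → ConjMove [(O, n)] (O.p k) (ns.map fun m => (O, m))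
  | cons {O : Octal} {n k : ℕ} {ns : List ℕ} {hs : List (Octal × ℕ)} {pts : ℝ}
      {hs' : List (Octal × ℕ)} :
      O.HeapMove n k ns → ConjMove hs pts hs' →
      ConjMove ((O, n) :: hs) (O.p k + pts) ((ns.map fun m => (O, m)) ++ hs')

/-- A "sub-move" in a selective sum of octal heaps: the mover moves on each heap or
skips it; the `Bool` flag records whether at least one heap was moved on. -/
inductive SubMove : List (Octal × ℕ) → ℝ → List (Octal × ℕ) → Bool → Prop where
  | nil : SubMove [] 0 [] false
  | skip {O : Octal} {n : ℕ} {hs : List (Octal × ℕ)} {pts : ℝ}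
      {hs' : List (Octal × ℕ)} {b : Bool} :
      SubMove hs pts hs' b → SubMove ((O, n) :: hs) pts ((O, n) :: hs') b
  | move {O : Octal} {n k : ℕ} {ns : List ℕ} {hs : List (Octal × ℕ)} {pts : ℝ}
      {hs' : List (Octal × ℕ)} {b : Bool} :
      O.HeapMove n k ns → SubMove hs pts hs' b →
      SubMove ((O, n) :: hs) (O.p k + pts) ((ns.map fun m => (O, m)) ++ hs') true

/-- A move in a selective sum: move on at least one heap, and on any subset of the rest. -/
def SelMove (hs : List (Octal × ℕ)) (pts : ℝ) (hs' : List (Octal × ℕ)) : Prop :=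
  SubMove hs pts hs' true


namespace SelAux

/-- Total number of beans in a position. -/
def beans (hs : List (Octal × ℕ)) : ℕ := (hs.map Prod.snd).sum

@[simp] lemma beans_nil : beans [] = 0 := rfl

@[simp] lemma beans_cons (q : Octal × ℕ) (hs : List (Octal × ℕ)) :
    beans (q :: hs) = q.2 + beans hs := by simp [beans]

@[simp] lemma beans_append (a b : List (Octal × ℕ)) :
    beans (a ++ b) = beans a + beans b := by simp [beans]

@[simp] lemma beans_map (O : Octal) (ns : List ℕ) :
    beans (ns.map fun m => (O, m)) = ns.sum := by
  simp [beans, List.map_map, Function.comp]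

lemma mem_le_beans {O : Octal} {n : ℕ} {hs : List (Octal × ℕ)} (h : (O, n) ∈ hs) :
    n ≤ beans hs := by
  induction hs with
  | nil => simp at h
  | cons q t ih =>
    rcases List.mem_cons.mp h with h | h
    · simp [← h]
    · have := ih h
      simp only [beans_cons]
      omega

/-- Skipping every heap is a submove with flag `false`. -/
lemma skipAll : ∀ hs : List (Octal × ℕ), SubMove hs 0 hs false
  | [] => SubMove.nil
  | (O, n) :: t => SubMove.skip (skipAll t)

/-- A heap move on a member of a position yields a selective move on the position. -/
lemma lift {O : Octal} {n k : ℕ} {ns : List ℕ} (hm : O.HeapMove n k ns) :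
    ∀ hs : List (Octal × ℕ), (O, n) ∈ hs → ∃ pts hs', SelMove hs pts hs'
  | [], h => absurd h (by simp)
  | q :: t, h => by
    rcases List.mem_cons.mp h with h | h
    · cases h
      exact ⟨_, _, SubMove.move hm (skipAll t)⟩
    · obtain ⟨pts, hs', hsel⟩ := lift hm t h
      obtain ⟨q1, q2⟩ := q
      exact ⟨pts, _, SubMove.skip hsel⟩

/-- Beans never increase under a submove, and strictly decrease if a move was made. -/
lemma sub_beans {hs : List (Octal × ℕ)} {pts : ℝ} {hs' : List (Octal × ℕ)} {b : Bool}
    (h : SubMove hs pts hs' b) :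
    beans hs' ≤ beans hs ∧ (b = true → beans hs' < beans hs) := by
  induction h with
  | nil => simp
  | @skip O n t p t' b _ ih =>
    simp only [beans_cons]
    exact ⟨by omega, fun hb => by have := ih.2 hb; omega⟩
  | @move O n k ns t p t' b hm _ ih =>
    obtain ⟨h1, h2, h3, _⟩ := hm
    have := ih.1
    simp only [beans_append, beans_map, beans_cons]
    constructor
    · omega
    · intro _; omega

/-- A true submove contains some heap move. -/
lemma subT {hs : List (Octal × ℕ)} {pts : ℝ} {hs' : List (Octal × ℕ)} {b : Bool}
    (h : SubMove hs pts hs' b) (hb : b = true) :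
    ∃ O n, (O, n) ∈ hs ∧ ∃ k ns, O.HeapMove n k ns := by
  induction h with
  | nil => simp at hb
  | @skip O n t p t' b _ ih =>
    obtain ⟨O', n', hmem, hm⟩ := ih hb
    exact ⟨O', n', List.mem_cons_of_mem _ hmem, hm⟩
  | @move O n k ns t p t' b hm _ _ =>
    exact ⟨O, n, List.mem_cons_self, k, ns, hm⟩

/-- Inversion for a selective move on a single heap. -/
lemma single_inv {O : Octal} {n : ℕ} {pts : ℝ} {hs' : List (Octal × ℕ)}
    (h : SubMove [(O, n)] pts hs' true) :
    ∃ k ns, O.HeapMove n k ns ∧ pts = O.p k ∧ hs' = ns.map fun m => (O, m) := by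
  cases h with
  | skip h' => cases h'
  | @move _ _ k ns _ p t' b hm h' =>
    cases h'
    exact ⟨k, ns, hm, by ring, by simp⟩

lemma dead_single {O : Octal} {n : ℕ} (h : ¬ ∃ k ns, O.HeapMove n k ns) :
    ¬ ∃ pts hs', SelMove [(O, n)] pts hs' := by
  rintro ⟨pts, hs', hsel⟩
  obtain ⟨k, ns, hm, _, _⟩ := single_inv hsel
  exact h ⟨k, ns, hm⟩

/-- The nonnegativity invariant on positions. -/
def GoodP (Gs : List (Octal × ℕ) → ℝ) (hs : List (Octal × ℕ)) : Prop :=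
  ∀ q ∈ hs, ∀ m ≤ q.2, 0 ≤ Gs [(q.1, m)]

lemma good_sub {Gs : List (Octal × ℕ) → ℝ} {hs : List (Octal × ℕ)} {pts : ℝ}
    {hs' : List (Octal × ℕ)} {b : Bool}
    (h : SubMove hs pts hs' b) (hg : GoodP Gs hs) : GoodP Gs hs' := by
  induction h with
  | nil => exact hg
  | @skip O n t p t' b _ ih =>
    intro q hq
    rcases List.mem_cons.mp hq with hq | hq
    · exact hg q (hq ▸ List.mem_cons_self)
    · exact ih (fun r hr => hg r (List.mem_cons_of_mem _ hr)) q hq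
  | @move O n k ns t p t' b hm _ ih =>
    intro q hq
    rcases List.mem_append.mp hq with hq | hq
    · obtain ⟨m, hmem, rfl⟩ := List.mem_map.mp hq
      intro m' hm'
      have hmn : m ≤ n := by
        have h1 : m ≤ ns.sum := List.le_sum_of_mem (by simpa using hmem)
        obtain ⟨_, _, h3, _⟩ := hm
        omega
      exact hg (O, n) (List.mem_cons_self) m' (le_trans hm' hmn)
    · exact ih (fun r hr => hg r (List.mem_cons_of_mem _ hr)) q hq

/-- Sum of single-heap values of a position. -/
def sumS (Gs : List (Octal × ℕ) → ℝ) (hs : List (Octal × ℕ)) : ℝ :=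
  (hs.map fun q => Gs [q]).sum

@[simp] lemma sumS_nil (Gs : List (Octal × ℕ) → ℝ) : sumS Gs [] = 0 := rfl

@[simp] lemma sumS_cons (Gs : List (Octal × ℕ) → ℝ) (q : Octal × ℕ)
    (hs : List (Octal × ℕ)) : sumS Gs (q :: hs) = Gs [q] + sumS Gs hs := by
  simp [sumS]

@[simp] lemma sumS_append (Gs : List (Octal × ℕ) → ℝ) (a b : List (Octal × ℕ)) :
    sumS Gs (a ++ b) = sumS Gs a + sumS Gs b := by simp [sumS]

section Main

variable (Gs : List (Octal × ℕ) → ℝ)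
    (hdead : ∀ hs : List (Octal × ℕ), (¬ ∃ pts hs', SelMove hs pts hs') → Gs hs = 0)
    (hrec : ∀ hs : List (Octal × ℕ), (∃ pts hs', SelMove hs pts hs') →
      IsGreatest {x : ℝ | ∃ pts hs', SelMove hs pts hs' ∧ x = pts - Gs hs'} (Gs hs))

include hdead in
/-- If a position has no selective move, its value and all its single-heap values
are zero. -/
lemma dead_case {hs : List (Octal × ℕ)} (h : ¬ ∃ pts hs', SelMove hs pts hs') :
    Gs hs = sumS Gs hs := by
  rw [hdead hs h]
  symm
  have : ∀ q ∈ hs.map fun q => Gs [q], q = 0 := by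
    rintro x hx
    obtain ⟨⟨O, n⟩, hmem, rfl⟩ := List.mem_map.mp hx
    refine hdead _ (dead_single ?_)
    rintro ⟨k, ns, hm⟩
    exact h (lift hm hs hmem)
  exact List.sum_eq_zero this

include hdead hrec in
lemma key : ∀ W hs, GoodP Gs hs → beans hs ≤ W → Gs hs = sumS Gs hs := by
  intro W
  induction W with
  | zero =>
    intro hs _ hb
    refine dead_case Gs hdead ?_
    rintro ⟨pts, hs', hsel⟩
    obtain ⟨O', n', hmem, k, ns, h1, h2, _⟩ := subT hsel rfl
    have := mem_le_beans hmem
    omega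
  | succ W IH =>
    intro hs hg hb
    by_cases hmov : ∃ pts hs', SelMove hs pts hs'
    · -- the inequality `pts - sumS hs' ≤ sumS hs` for any submove
      have sub_le : ∀ hs2 pts2 hs2' b2, SubMove hs2 pts2 hs2' b2 → GoodP Gs hs2 →
          beans hs2 ≤ W + 1 → pts2 - sumS Gs hs2' ≤ sumS Gs hs2 := by
        intro hs2 pts2 hs2' b2 h
        induction h with
        | nil => simp
        | @skip O n t p t' b _ ih =>
          intro hg2 hb2
          have h0n : 0 ≤ Gs [(O, n)] := hg2 (O, n) (List.mem_cons_self) n le_rfl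
          have ht : p - sumS Gs t' ≤ sumS Gs t := by
            refine ih (fun r hr => hg2 r (List.mem_cons_of_mem _ hr)) ?_
            simp only [beans_cons] at hb2; omega
          simp only [sumS_cons]
          linarith
        | @move O n k ns t p t' b hm _ ih =>
          intro hg2 hb2
          simp only [beans_cons] at hb2
          have ht : p - sumS Gs t' ≤ sumS Gs t := by
            refine ih (fun r hr => hg2 r (List.mem_cons_of_mem _ hr)) (by omega)
          -- the single-heap inequality
          have hns : Gs (ns.map fun m => (O, m)) = sumS Gs (ns.map fun m => (O, m)) := by
            refine IH _ ?_ ?_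
            · intro q hq
              obtain ⟨m, hmem, rfl⟩ := List.mem_map.mp hq
              intro m' hm'
              have hmn : m ≤ n := by
                have := List.le_sum_of_mem (xs := ns) (by simpa using hmem)
                obtain ⟨_, _, h3, _⟩ := hm
                omega
              exact hg2 (O, n) (List.mem_cons_self) m' (le_trans hm' hmn)
            · obtain ⟨h1, h2, h3, _⟩ := hm
              simp only [beans_map]
              omega
          have hsingle : O.p k - sumS Gs (ns.map fun m => (O, m)) ≤ Gs [(O, n)] := by
            have hsel1 : SelMove [(O, n)] (O.p k + 0) ((ns.map fun m => (O, m)) ++ []) :=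
              SubMove.move hm SubMove.nil
            have hub := (hrec [(O, n)] ⟨_, _, hsel1⟩).2
            have : O.p k + 0 - Gs ((ns.map fun m => (O, m)) ++ []) ≤ Gs [(O, n)] :=
              hub ⟨_, _, hsel1, rfl⟩
            rw [List.append_nil] at this
            rw [← hns]
            linarith
          simp only [sumS_cons, sumS_append]
          linarith
      -- the optimal move: move optimally in every live heap
      have opt : ∀ hs2, GoodP Gs hs2 → beans hs2 ≤ W + 1 →
          ∃ pts2 hs2' b2, SubMove hs2 pts2 hs2' b2 ∧
            pts2 - sumS Gs hs2' = sumS Gs hs2 ∧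
            (b2 = false → ∀ q ∈ hs2, ¬ ∃ k ns, (q.1).HeapMove q.2 k ns) := by
        intro hs2
        induction hs2 with
        | nil => exact fun _ _ => ⟨0, [], false, SubMove.nil, by simp, by simp⟩
        | cons q t iht =>
          obtain ⟨O, n⟩ := q
          intro hg2 hb2
          simp only [beans_cons] at hb2
          obtain ⟨pts, t', b, hsub, heq, hcond⟩ :=
            iht (fun r hr => hg2 r (List.mem_cons_of_mem _ hr)) (by omega)
          by_cases hn : ∃ k ns, O.HeapMove n k ns
          · obtain ⟨k0, ns0, hm0⟩ := hn
            have hsel1 : SelMove [(O, n)] (O.p k0 + 0) ((ns0.map fun m => (O, m)) ++ []) :=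
              SubMove.move hm0 SubMove.nil
            obtain ⟨pts1, qs', hsel', hval⟩ := (hrec [(O, n)] ⟨_, _, hsel1⟩).1
            obtain ⟨k, ns, hm, hp, hq⟩ := single_inv hsel'
            subst hq
            have hns : Gs (ns.map fun m => (O, m)) = sumS Gs (ns.map fun m => (O, m)) := by
              refine IH _ ?_ ?_
              · intro q hq2
                obtain ⟨m, hmem, rfl⟩ := List.mem_map.mp hq2
                intro m' hm'
                have hmn : m ≤ n := by
                  have := List.le_sum_of_mem (xs := ns) (by simpa using hmem)
                  obtain ⟨_, _, h3, _⟩ := hm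
                  omega
                exact hg2 (O, n) (List.mem_cons_self) m' (le_trans hm' hmn)
              · obtain ⟨h1, h2, h3, _⟩ := hm
                simp only [beans_map]
                omega
            refine ⟨O.p k + pts, (ns.map fun m => (O, m)) ++ t', true,
              SubMove.move hm hsub, ?_, by simp⟩
            have hGval : Gs [(O, n)] = O.p k - sumS Gs (ns.map fun m => (O, m)) := by
              rw [hval, hp, ← hns]
            simp only [sumS_cons, sumS_append]
            rw [hGval]
            linarith
          · have hGz : Gs [(O, n)] = 0 := hdead _ (dead_single hn)
            refine ⟨pts, (O, n) :: t', b, SubMove.skip hsub, ?_, ?_⟩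
            · simp only [sumS_cons, hGz]
              linarith
            · intro hbf q hq
              rcases List.mem_cons.mp hq with hq | hq
              · subst hq; exact hn
              · exact hcond hbf q hq
      -- combine
      obtain ⟨pts2, hs2', b2, hsub, heq, hcond⟩ := opt hs hg hb
      have hbtrue : b2 = true := by
        cases b2 with
        | true => rfl
        | false =>
          exfalso
          obtain ⟨pts, hs', hsel⟩ := hmov
          obtain ⟨O', n', hmem, k, ns, hm⟩ := subT hsel rfl
          exact hcond rfl (O', n') hmem ⟨k, ns, hm⟩
      subst hbtrue
      have hge : sumS Gs hs ≤ Gs hs := by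
        have hlt : beans hs2' < beans hs := (sub_beans hsub).2 rfl
        have hs2val : Gs hs2' = sumS Gs hs2' :=
          IH _ (good_sub hsub hg) (by omega)
        refine (hrec hs hmov).2 ⟨pts2, hs2', hsub, ?_⟩
        rw [hs2val, heq]
      have hle2 : Gs hs ≤ sumS Gs hs := by
        obtain ⟨pts, hs', hsel, hval⟩ := (hrec hs hmov).1
        have hlt : beans hs' < beans hs := (sub_beans hsel).2 rfl
        have hs'val : Gs hs' = sumS Gs hs' := IH _ (good_sub hsel hg) (by omega)
        rw [hval, hs'val]
        exact sub_le _ _ _ _ hsel hg hb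
      linarith
    · exact dead_case Gs hdead hmov

end Main

end SelAux

/-- If the single-heap selective-sum scoring Grundy values of heaps `n ≤ N i` in the
octal games `O i` are all nonnegative, then the selective-sum Grundy value of such
heaps joined selectively is the sum of the single-heap values. -/
theorem sel_grundy_additive_of_nonneg (Gs : List (Octal × ℕ) → ℝ)
    (h0 : Gs [] = 0)
    (hdead : ∀ hs : List (Octal × ℕ), (¬ ∃ pts hs', SelMove hs pts hs') → Gs hs = 0)
    (hrec : ∀ hs : List (Octal × ℕ), (∃ pts hs', SelMove hs pts hs') →
      IsGreatest {x : ℝ | ∃ pts hs', SelMove hs pts hs' ∧ x = pts - Gs hs'} (Gs hs))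
    (v : ℕ) (O : Fin v → Octal) (N : Fin v → ℕ)
    (hnn : ∀ i : Fin v, ∀ n : ℕ, n ≤ N i → 0 ≤ Gs [(O i, n)])
    (heap : Fin v → ℕ) (hle : ∀ i, heap i ≤ N i) :
    Gs (List.ofFn fun i => (O i, heap i)) = ∑ i : Fin v, Gs [(O i, heap i)] := by
  have hmain := SelAux.key Gs hdead hrec (SelAux.beans (List.ofFn fun i => (O i, heap i)))
    (List.ofFn fun i => (O i, heap i)) ?_ le_rfl
  · rw [hmain]
    simp [SelAux.sumS, List.map_ofFn, List.sum_ofFn, Function.comp]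
  · intro q hq m hm
    obtain ⟨i, hi⟩ := List.mem_ofFn.mp hq
    have h1 : q.1 = O i := by rw [← hi]
    have h2 : q.2 = heap i := by rw [← hi]
    rw [h1]
    exact hnn i m (le_trans (h2 ▸ hm) (hle i))
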